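/- There exist constants C > 0 and K such that for every integer k ≥ K there is a finite vertex set V and a family E of k-element subsets of V with |E| ≤ 2^(k + C·k^(2/3)) such that for every coloring c : V → Bool there is an edge e ∈ E on which c is constant (i.e., the k-uniform hypergraph (V, E) is not two-colorable). -/

import Mathlib

open Finset Real Nat

lemma exp_neg_le_one_sub {x : ℝ} (h1 : x < 1) :
    Real.exp (-(x / (1 - x))) ≤ 1 - x := by
  have hpos : 0 < 1 - x := by linarith
  have h := Real.add_one_le_exp (x / (1 - x))
  have h2 : 1 / (1 - x) ≤ Real.exp (x / (1 - x)) := by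
    have he : x / (1 - x) + 1 = 1 / (1 - x) := by field_simp; ring
    linarith
  rw [Real.exp_neg, inv_le_comm₀ (Real.exp_pos _) hpos, ← one_div]
  exact h2

lemma exp_neg_four_le_pow (x : ℝ) (N : ℕ) (h1 : x < 1)
    (h4 : (N : ℝ) * x / (1 - x) ≤ 4) :
    Real.exp (-4) ≤ (1 - x) ^ N := by
  calc Real.exp (-4) ≤ Real.exp (-((N : ℝ) * x / (1 - x))) :=
        Real.exp_le_exp.2 (by linarith)
    _ = Real.exp (-(x / (1 - x))) ^ N := by
        rw [← Real.exp_nat_mul]; congr 1; ring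
    _ ≤ (1 - x) ^ N := pow_le_pow_left₀ (Real.exp_pos _).le (exp_neg_le_one_sub h1) N

lemma choose_ratio (k : ℕ) (hk : 100 ≤ k) :
    Real.exp (-4) / 2 ^ k * ((k ^ 2).choose k : ℝ) ≤ ((k ^ 2 / 2).choose k : ℝ) := by
  have hk0 : (0:ℝ) < k := by positivity
  have hkR : (100:ℝ) ≤ k := by exact_mod_cast hk
  set n := k ^ 2 with hn
  set s := n / 2 with hs
  have hn2 : k * 2 ≤ n := by rw [hn]; nlinarith
  have hks : k ≤ s + 1 := by omega
  have hn1 : 1 ≤ n := by omega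
  have hcast : ((s + 1 - k : ℕ) : ℝ) = (s : ℝ) + 1 - k := by
    push_cast [Nat.cast_sub hks]; ring
  have hfac : (0:ℝ) < (k ! : ℝ) := by positivity
  have h1 : ((s + 1 - k : ℕ) : ℝ) ^ k ≤ (k ! : ℝ) * (s.choose k : ℝ) := by
    have h1n : (s + 1 - k) ^ k ≤ k ! * s.choose k := by
      rw [← Nat.descFactorial_eq_factorial_mul_choose]
      exact Nat.pow_sub_le_descFactorial s k
    exact_mod_cast h1n
  have h2 : (k ! : ℝ) * ((n).choose k : ℝ) ≤ ((n : ℝ)) ^ k := by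
    have h2n : k ! * n.choose k ≤ n ^ k := by
      rw [← Nat.descFactorial_eq_factorial_mul_choose]
      exact Nat.descFactorial_le_pow n k
    exact_mod_cast h2n
  have h2k : (2:ℝ)/k ≤ 1/50 := by rw [div_le_iff₀ hk0]; linarith
  have h2k0 : (0:ℝ) < 2/k := by positivity
  have hx1 : (2:ℝ)/k < 1 := by linarith
  have h4 : (k:ℝ) * (2/k) / (1 - 2/k) ≤ 4 := by
    have he : (k:ℝ) * (2/k) = 2 := by field_simp
    rw [he, div_le_iff₀ (by linarith)]
    linarith
  have hexp := exp_neg_four_le_pow (2/k) k hx1 h4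
  have hs2 : ((n:ℝ)) - 1 ≤ 2 * s := by
    have : n - 1 ≤ 2 * s := by omega
    have := (Nat.cast_le (α := ℝ)).2 this
    rw [Nat.cast_sub hn1] at this
    push_cast at this ⊢
    linarith
  have hnk : (n:ℝ) = (k:ℝ) * k := by rw [hn]; push_cast; ring
  have ha : ((n:ℝ)/2) * (1 - 2/k) ≤ ((s + 1 - k : ℕ):ℝ) := by
    rw [hcast]
    have key : ((n:ℝ)/2) * (1 - 2/k) = (n:ℝ)/2 - k := by
      rw [hnk]; field_simp
    rw [key]; linarith
  have hbase : Real.exp (-4) * ((n:ℝ)/2) ^ k ≤ ((s + 1 - k : ℕ):ℝ) ^ k := by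
    have hp : (0:ℝ) ≤ ((n:ℝ)/2) ^ k := by positivity
    have hnn : (0:ℝ) ≤ ((n:ℝ)/2) * (1 - 2/k) := by
      have : (0:ℝ) ≤ (n:ℝ)/2 := by positivity
      nlinarith
    calc Real.exp (-4) * ((n:ℝ)/2) ^ k ≤ (1 - 2/(k:ℝ)) ^ k * ((n:ℝ)/2) ^ k :=
          mul_le_mul_of_nonneg_right hexp hp
      _ = (((n:ℝ)/2) * (1 - 2/k)) ^ k := by rw [← mul_pow]; ring_nf
      _ ≤ ((s + 1 - k : ℕ):ℝ) ^ k := pow_le_pow_left₀ hnn ha k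
  have hfinal : Real.exp (-4) / 2 ^ k * ((n).choose k : ℝ) * (k ! : ℝ)
      ≤ ((s).choose k : ℝ) * (k ! : ℝ) := by
    have e1 : Real.exp (-4) / 2 ^ k * ((n).choose k : ℝ) * (k ! : ℝ)
        = Real.exp (-4) * ((k ! : ℝ) * ((n).choose k : ℝ)) / 2 ^ k := by ring
    rw [e1]
    calc Real.exp (-4) * ((k ! : ℝ) * ((n).choose k : ℝ)) / 2 ^ k
        ≤ Real.exp (-4) * ((n:ℝ)) ^ k / 2 ^ k := by gcongr
      _ = Real.exp (-4) * ((n:ℝ)/2) ^ k := by rw [div_pow]; ring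
      _ ≤ ((s + 1 - k : ℕ):ℝ) ^ k := hbase
      _ ≤ ((s).choose k : ℝ) * (k ! : ℝ) := by linarith
  exact le_of_mul_le_mul_right hfinal hfac

lemma numeric_key (k : ℕ) (hk : 100 ≤ k) :
    2 ^ (k ^ 2) * ((k ^ 2).choose k - (k ^ 2 / 2).choose k) ^ (60 * k ^ 2 * 2 ^ k)
      < ((k ^ 2).choose k) ^ (60 * k ^ 2 * 2 ^ k) := by
  have hkR : (100:ℝ) ≤ k := by exact_mod_cast hk
  set n := k ^ 2 with hn
  set m := 60 * k ^ 2 * 2 ^ k with hm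
  have hGM : (n / 2).choose k ≤ n.choose k := Nat.choose_le_choose k (Nat.div_le_self _ _)
  have hMpos : 0 < n.choose k := Nat.choose_pos (Nat.le_self_pow (by norm_num) k)
  rw [← Nat.cast_lt (α := ℝ)]
  push_cast [Nat.cast_sub hGM]
  set M : ℝ := ((n).choose k : ℝ) with hM
  set G : ℝ := ((n / 2).choose k : ℝ) with hG
  have hM0 : (0:ℝ) < M := by rw [hM]; exact_mod_cast hMpos
  have hGM' : G ≤ M := by rw [hM, hG]; exact_mod_cast hGM
  set q : ℝ := Real.exp (-4) / 2 ^ k with hq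
  have hq0 : 0 < q := by positivity
  have hq1 : q < 1 := by
    have h1 : Real.exp (-4) < 1 := Real.exp_lt_one_iff.2 (by norm_num)
    have h2 : (1:ℝ) ≤ 2 ^ k := one_le_pow₀ (by norm_num)
    rw [hq, div_lt_one (by positivity)]
    linarith
  have hqG : q * M ≤ G := choose_ratio k hk
  have step1 : M - G ≤ M * (1 - q) := by nlinarith
  have hMG0 : (0:ℝ) ≤ M - G := by linarith
  have step2 : (M - G) ^ m ≤ M ^ m * (1 - q) ^ m := by
    rw [← mul_pow]
    exact pow_le_pow_left₀ hMG0 step1 m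
  have step3 : (1 - q) ^ m ≤ Real.exp (-(m * q)) := by
    have h1 : 1 - q ≤ Real.exp (-q) := by
      have := Real.add_one_le_exp (-q); linarith
    calc (1 - q) ^ m ≤ Real.exp (-q) ^ m :=
          pow_le_pow_left₀ (by linarith) h1 m
      _ = Real.exp (-((m:ℝ) * q)) := by rw [← Real.exp_nat_mul]; ring_nf
  have h2n : (2:ℝ) ^ n = Real.exp ((n:ℝ) * Real.log 2) := by
    rw [Real.exp_nat_mul, Real.exp_log (by norm_num)]
  have hexp4 : Real.exp 4 < 55 := by
    have h1 : Real.exp 4 = Real.exp 1 ^ 4 := by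
      rw [← Real.exp_nat_mul]; norm_num
    have h2 : Real.exp 1 ^ 4 < 2.7182818286 ^ 4 :=
      pow_lt_pow_left₀ Real.exp_one_lt_d9 (Real.exp_pos 1).le (by norm_num)
    rw [h1]; nlinarith
  have hlog2 : Real.log 2 < 0.6931471808 := Real.log_two_lt_d9
  have hkey : (n:ℝ) * Real.log 2 < (m:ℝ) * q := by
    have hmq : (m:ℝ) * q = 60 * (n:ℝ) * Real.exp (-4) := by
      rw [hm, hq, hn]
      have h2k : ((2:ℝ)) ^ k ≠ 0 := by positivity
      push_cast
      field_simp
    rw [hmq]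
    have he4 : Real.exp (-4) = 1 / Real.exp 4 := by
      rw [Real.exp_neg]; ring
    have he4' : 1 / 55 < Real.exp (-4) := by
      rw [he4]
      apply div_lt_div_of_pos_left (by norm_num) (Real.exp_pos 4) hexp4
    have hn0 : (0:ℝ) < (n:ℝ) := by
      have : 0 < n := by rw [hn]; exact Nat.pow_pos_iff.2 (Or.inl (by omega))
      exact_mod_cast this
    have hlogpos : 0 < Real.log 2 := Real.log_pos (by norm_num)
    nlinarith
  calc (2:ℝ) ^ n * (M - G) ^ m ≤ (2:ℝ) ^ n * (M ^ m * Real.exp (-(m * q))) := by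
        have := mul_le_mul_of_nonneg_left (step2.trans
          (mul_le_mul_of_nonneg_left step3 (by positivity))) (by positivity : (0:ℝ) ≤ (2:ℝ)^n)
        exact this
    _ = M ^ m * Real.exp ((n:ℝ) * Real.log 2 - (m:ℝ) * q) := by
        rw [h2n, Real.exp_sub, Real.exp_neg]; ring
    _ < M ^ m * 1 := by
        apply mul_lt_mul_of_pos_left _ (by positivity)
        exact Real.exp_lt_one_iff.2 (by linarith)
    _ = M ^ m := mul_one _

lemma exists_E (k : ℕ) (hk : 100 ≤ k) :
    ∃ E : Finset (Finset (Fin (k ^ 2))),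
      (∀ e ∈ E, e.card = k) ∧ E.card ≤ 60 * k ^ 2 * 2 ^ k ∧
      ∀ c : Fin (k ^ 2) → Bool, ∃ e ∈ E, ∃ b : Bool, ∀ v ∈ e, c v = b := by
  classical
  set n := k ^ 2 with hn
  set m := 60 * k ^ 2 * 2 ^ k with hm
  set 𝒦 : Finset (Finset (Fin n)) := Finset.powersetCard k Finset.univ with h𝒦
  have hKmem : ∀ e, e ∈ 𝒦 ↔ e.card = k := by
    intro e
    simp [h𝒦, Finset.mem_powersetCard, Finset.subset_univ]
  have hKcard : 𝒦.card = n.choose k := by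
    rw [h𝒦, Finset.card_powersetCard, Finset.card_univ, Fintype.card_fin]
  set Mono : (Fin n → Bool) → Finset (Finset (Fin n)) :=
    fun c => 𝒦.filter (fun e => ∃ b, ∀ v ∈ e, c v = b) with hMono
  have hMonoSub : ∀ c, Mono c ⊆ 𝒦 := fun c => Finset.filter_subset _ _
  have hG : ∀ c, (n / 2).choose k ≤ (Mono c).card := by
    intro c
    have hsum : (Finset.univ.filter (fun v => c v = true)).card
        + (Finset.univ.filter (fun v => c v = false)).card = n := by
      have h := Finset.card_filter_add_card_filter_not
        (s := (Finset.univ : Finset (Fin n))) (p := fun v => c v = true)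
      simp only [Bool.not_eq_true] at h
      rw [Finset.card_univ, Fintype.card_fin] at h
      convert h using 2
    obtain ⟨b, hb⟩ : ∃ b : Bool, n / 2 ≤ (Finset.univ.filter (fun v => c v = b)).card := by
      by_contra h
      push_neg at h
      have h1 := h true
      have h2 := h false
      omega
    have hsub : Finset.powersetCard k (Finset.univ.filter (fun v => c v = b)) ⊆ Mono c := by
      intro e he
      rw [Finset.mem_powersetCard] at he
      rw [hMono, Finset.mem_filter]
      exact ⟨(hKmem e).2 he.2, b, fun v hv => (Finset.mem_filter.1 (he.1 hv)).2⟩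
    calc (n / 2).choose k
        ≤ (Finset.univ.filter (fun v => c v = b)).card.choose k := Nat.choose_le_choose _ hb
      _ = (Finset.powersetCard k (Finset.univ.filter (fun v => c v = b))).card :=
          (Finset.card_powersetCard _ _).symm
      _ ≤ (Mono c).card := Finset.card_le_card hsub
  set F := Fintype.piFinset (fun _ : Fin m => 𝒦) with hF
  set Bad : (Fin n → Bool) → Finset (Fin m → Finset (Fin n)) :=
    fun c => Fintype.piFinset (fun _ : Fin m => 𝒦 \ Mono c) with hBad
  have hFcard : F.card = 𝒦.card ^ m := by
    rw [hF, Fintype.card_piFinset]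
    simp
  have hBadcard : ∀ c, (Bad c).card ≤ (𝒦.card - (n / 2).choose k) ^ m := by
    intro c
    rw [hBad, Fintype.card_piFinset]
    have : ∀ _i : Fin m, (𝒦 \ Mono c).card ≤ 𝒦.card - (n / 2).choose k := by
      intro i
      rw [Finset.card_sdiff_of_subset (hMonoSub c)]
      exact Nat.sub_le_sub_left (hG c) _
    calc ∏ i : Fin m, (𝒦 \ Mono c).card ≤ ∏ _i : Fin m, (𝒦.card - (n / 2).choose k) :=
          Finset.prod_le_prod (fun _ _ => Nat.zero_le _) (fun i _ => this i)
      _ = (𝒦.card - (n / 2).choose k) ^ m := by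
          rw [Finset.prod_const, Finset.card_univ, Fintype.card_fin]
  set BadU := Finset.univ.biUnion Bad with hBadU
  have hBadUcard : BadU.card ≤ 2 ^ n * (𝒦.card - (n / 2).choose k) ^ m := by
    calc BadU.card ≤ ∑ c : Fin n → Bool, (Bad c).card := Finset.card_biUnion_le
      _ ≤ ∑ _c : Fin n → Bool, (𝒦.card - (n / 2).choose k) ^ m :=
          Finset.sum_le_sum (fun c _ => hBadcard c)
      _ = 2 ^ n * (𝒦.card - (n / 2).choose k) ^ m := by
          rw [Finset.sum_const, Finset.card_univ]
          simp [Fintype.card_fun]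
  have hlt : BadU.card < F.card := by
    rw [hFcard, hKcard]
    calc BadU.card ≤ 2 ^ n * (n.choose k - (n / 2).choose k) ^ m := by rw [← hKcard]; exact hBadUcard
      _ < (n.choose k) ^ m := numeric_key k hk
  have hne : (F \ BadU).Nonempty := by
    rw [Finset.sdiff_nonempty]
    intro hsub
    exact absurd (Finset.card_le_card hsub) (not_le.2 hlt)
  obtain ⟨f, hf⟩ := hne
  rw [Finset.mem_sdiff] at hf
  have hfF : ∀ i, f i ∈ 𝒦 := by
    have := hf.1
    rw [hF, Fintype.mem_piFinset] at this
    exact this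
  have hfhit : ∀ c, ∃ i, f i ∈ Mono c := by
    intro c
    by_contra h
    push_neg at h
    apply hf.2
    rw [hBadU, Finset.mem_biUnion]
    exact ⟨c, Finset.mem_univ _,
      Fintype.mem_piFinset.2 (fun i => Finset.mem_sdiff.2 ⟨hfF i, h i⟩)⟩
  refine ⟨Finset.image f Finset.univ, ?_, ?_, ?_⟩
  · intro e he
    obtain ⟨i, _, rfl⟩ := Finset.mem_image.1 he
    exact (hKmem _).1 (hfF i)
  · calc (Finset.image f Finset.univ).card ≤ (Finset.univ : Finset (Fin m)).card :=
        Finset.card_image_le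
      _ = m := by rw [Finset.card_univ, Fintype.card_fin]
  · intro c
    obtain ⟨i, hi⟩ := hfhit c
    rw [hMono, Finset.mem_filter] at hi
    exact ⟨f i, Finset.mem_image_of_mem f (Finset.mem_univ i), hi.2⟩

lemma card_bound (k : ℕ) (hk : 100 ≤ k) :
    ((60 * k ^ 2 * 2 ^ k : ℕ) : ℝ) ≤ (2 : ℝ) ^ ((k : ℝ) + 6 * (k : ℝ) ^ ((2 : ℝ) / 3)) := by
  have hkR : (100:ℝ) ≤ k := by exact_mod_cast hk
  have hk0 : (0:ℝ) < k := by linarith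
  set y : ℝ := (k : ℝ) ^ ((2 : ℝ) / 3) with hy
  have hy0 : 0 ≤ y := Real.rpow_nonneg hk0.le _
  have hy3 : y ^ (3:ℕ) = (k:ℝ) ^ (2:ℕ) := by
    rw [hy, ← Real.rpow_natCast ((k:ℝ) ^ ((2:ℝ)/3)) 3, ← Real.rpow_mul hk0.le]
    norm_num
  have hy10 : 10 ≤ y := by
    by_contra h
    push_neg at h
    have h1 : y ^ (3:ℕ) < 10 ^ (3:ℕ) := pow_lt_pow_left₀ h hy0 (by norm_num)
    have h2 : (10:ℝ) ^ (3:ℕ) = 1000 := by norm_num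
    have h3 : (10000:ℝ) ≤ (k:ℝ) ^ (2:ℕ) := by nlinarith
    rw [hy3] at h1
    linarith
  have hL1 : (0.6931471803:ℝ) < Real.log 2 := Real.log_two_gt_d9
  have hL2 : Real.log 2 < 0.6931471808 := Real.log_two_lt_d9
  have hrhs : (2 : ℝ) ^ ((k : ℝ) + 6 * y) = (2:ℝ) ^ (k:ℕ) * (2:ℝ) ^ (6 * y) := by
    rw [Real.rpow_add (by norm_num), Real.rpow_natCast]
  have hmain : (60 * (k:ℝ) ^ (2:ℕ)) ≤ (2:ℝ) ^ (6 * y) := by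
    have hpos : (0:ℝ) < 60 * (k:ℝ) ^ (2:ℕ) := by positivity
    rw [Real.rpow_def_of_pos (by norm_num : (0:ℝ) < 2)]
    rw [← Real.exp_log hpos]
    apply Real.exp_le_exp.2
    have hlog1 : Real.log (60 * (k:ℝ) ^ (2:ℕ)) = Real.log 60 + 2 * Real.log k := by
      rw [Real.log_mul (by norm_num) (by positivity), Real.log_pow]
      norm_num
    have hlog60 : Real.log 60 ≤ 6 * Real.log 2 := by
      calc Real.log 60 ≤ Real.log 64 := Real.log_le_log (by norm_num) (by norm_num)
        _ = 6 * Real.log 2 := by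
          rw [show (64:ℝ) = 2 ^ (6:ℕ) by norm_num, Real.log_pow]
          norm_num
    have hlogk : Real.log k ≤ (3/2) * y := by
      have := Real.log_le_rpow_div hk0.le (by norm_num : (0:ℝ) < 2/3)
      rw [hlog1] at *
      calc Real.log k ≤ (k:ℝ) ^ ((2:ℝ)/3) / (2/3) := this
        _ = (3/2) * y := by rw [hy]; ring
    rw [hlog1]
    have hprod : 0 ≤ (y - 10) * (2 * Real.log 2 - 1) := by
      apply mul_nonneg (by linarith) (by linarith)
    nlinarith
  calc ((60 * k ^ 2 * 2 ^ k : ℕ) : ℝ) = 60 * (k:ℝ) ^ (2:ℕ) * (2:ℝ) ^ (k:ℕ) := by push_cast; ring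
    _ ≤ (2:ℝ) ^ (6 * y) * (2:ℝ) ^ (k:ℕ) := by
        apply mul_le_mul_of_nonneg_right hmain (by positivity)
    _ = (2 : ℝ) ^ ((k : ℝ) + 6 * y) := by rw [hrhs]; ring

/-- There exist constants `C > 0` and `K` such that for every integer `k ≥ K` there is a
finite vertex set (here `Fin n`) and a family `E` of `k`-element subsets with
`|E| ≤ 2 ^ (k + C * k ^ (2/3))` such that every coloring `c : V → Bool` has a
monochromatic edge, i.e. the `k`-uniform hypergraph is not two-colorable. -/
theorem gebauer_construction :
    ∃ C : ℝ, 0 < C ∧ ∃ K : ℕ, ∀ k : ℕ, K ≤ k →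
      ∃ (n : ℕ) (E : Finset (Finset (Fin n))),
        (∀ e ∈ E, e.card = k) ∧
        (E.card : ℝ) ≤ (2 : ℝ) ^ ((k : ℝ) + C * (k : ℝ) ^ ((2 : ℝ) / 3)) ∧
        ∀ c : Fin n → Bool, ∃ e ∈ E, ∃ b : Bool, ∀ v ∈ e, c v = b := by
  refine ⟨6, by norm_num, 100, fun k hk => ?_⟩
  obtain ⟨E, h1, h2, h3⟩ := exists_E k hk
  refine ⟨k ^ 2, E, h1, ?_, h3⟩
  calc (E.card : ℝ) ≤ ((60 * k ^ 2 * 2 ^ k : ℕ) : ℝ) := by exact_mod_cast h2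
    _ ≤ (2 : ℝ) ^ ((k : ℝ) + 6 * (k : ℝ) ^ ((2 : ℝ) / 3)) := card_bound k hk
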